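/- If ψ is an oddomorphism from F to G and a ∈ V(F) is an odd vertex with respect to ψ, then deg_F(a) ≥ deg_G(ψ(a)). Consequently, if F admits a weak oddomorphism to G, then the maximum degree of F is at least the maximum degree of G. -/

import Mathlib

open SimpleGraph

variable {α β : Type}

/-- A vertex `a` of `F` is *odd* with respect to a homomorphism `ψ : F → G` if
`|N_F(a) ∩ ψ⁻¹(v)|` is odd for every `v` adjacent to `ψ a` in `G`. -/
def IsOddVertex (F : SimpleGraph α) (G : SimpleGraph β) (ψ : F →g G) (a : α) : Prop :=
  ∀ v : β, G.Adj (ψ a) v → Odd (F.neighborSet a ∩ (⇑ψ) ⁻¹' {v}).ncard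

/-- A vertex `a` of `F` is *even* with respect to a homomorphism `ψ : F → G` if
`|N_F(a) ∩ ψ⁻¹(v)|` is even for every `v` adjacent to `ψ a` in `G`. -/
def IsEvenVertex (F : SimpleGraph α) (G : SimpleGraph β) (ψ : F →g G) (a : α) : Prop :=
  ∀ v : β, G.Adj (ψ a) v → Even (F.neighborSet a ∩ (⇑ψ) ⁻¹' {v}).ncard

/-- An *oddomorphism* from `F` to `G` is a homomorphism `ψ` such that every vertex of `F`
is odd or even w.r.t. `ψ`, and every fibre `ψ⁻¹(v)` contains an odd number of odd
vertices. -/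
def IsOddomorphism (F : SimpleGraph α) (G : SimpleGraph β) (ψ : F →g G) : Prop :=
  (∀ a : α, IsOddVertex F G ψ a ∨ IsEvenVertex F G ψ a) ∧
  (∀ v : β, Odd {a : α | ψ a = v ∧ IsOddVertex F G ψ a}.ncard)

/-- A homomorphism `ψ : F → G` is a *weak oddomorphism* if its restriction to (the vertex
set of) some subgraph `F'` of `F` is an oddomorphism from `F'` to `G`. -/
def IsWeakOddomorphism (F : SimpleGraph α) (G : SimpleGraph β) (ψ : F →g G) : Prop :=
  ∃ F' : F.Subgraph, IsOddomorphism F'.coe G (ψ.comp F'.hom)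


lemma oddVertex_degree_le {α β : Type} [Fintype α] [Fintype β]
    (F : SimpleGraph α) (G : SimpleGraph β)
    [DecidableRel F.Adj] [DecidableRel G.Adj]
    (ψ : F →g G) (a : α) (h : IsOddVertex F G ψ a) :
    G.degree (ψ a) ≤ F.degree a := by
  classical
  rw [← card_neighborFinset_eq_degree, ← card_neighborFinset_eq_degree]
  apply Finset.card_le_card_of_surjOn (⇑ψ)
  intro v hv
  simp only [Finset.mem_coe, mem_neighborFinset] at hv
  have hodd := h v hv
  have hne : (F.neighborSet a ∩ (⇑ψ) ⁻¹' {v}).Nonempty := by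
    rw [Set.nonempty_iff_ne_empty]
    intro he
    rw [he, Set.ncard_empty] at hodd
    simpa using hodd
  obtain ⟨b, hb1, hb2⟩ := hne
  exact ⟨b, by simpa using hb1, hb2⟩

/-- If `ψ` is an oddomorphism from `F` to `G` and `a` is an odd vertex
w.r.t. `ψ`, then `deg_F(a) ≥ deg_G(ψ a)`; consequently, if `F` admits a weak oddomorphism
to `G` then `Δ(F) ≥ Δ(G)`. -/
theorem oddomorphism_degree [Fintype α] [Fintype β]
    (F : SimpleGraph α) (G : SimpleGraph β)
    [DecidableRel F.Adj] [DecidableRel G.Adj] :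
    (∀ ψ : F →g G, IsOddomorphism F G ψ →
      ∀ a : α, IsOddVertex F G ψ a → G.degree (ψ a) ≤ F.degree a) ∧
    ((∃ ψ : F →g G, IsWeakOddomorphism F G ψ) → G.maxDegree ≤ F.maxDegree) := by
  classical
  constructor
  · intro ψ _ a ha
    exact oddVertex_degree_le F G ψ a ha
  · rintro ⟨ψ, F', hF'⟩
    by_cases hβ : Nonempty β
    · obtain ⟨v, hv⟩ := G.exists_maximal_degree_vertex
      have hodd := hF'.2 v
      have hne : {a : ↥F'.verts | (ψ.comp F'.hom) a = v ∧
          IsOddVertex F'.coe G (ψ.comp F'.hom) a}.Nonempty := by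
        rw [Set.nonempty_iff_ne_empty]
        intro he
        rw [he, Set.ncard_empty] at hodd
        simpa using hodd
      obtain ⟨a, hav, haodd⟩ := hne
      haveI : Fintype ↥F'.verts := Set.Finite.fintype (Set.toFinite _)
      haveI : DecidableRel F'.coe.Adj := Classical.decRel _
      have h1 : G.degree v ≤ F'.coe.degree a := by
        rw [← hav]
        have := oddVertex_degree_le F'.coe G (ψ.comp F'.hom) a haodd
        convert this using 2
      have h2 : F'.coe.degree a ≤ F.degree a.1 := by
        rw [← card_neighborFinset_eq_degree, ← card_neighborFinset_eq_degree]
        apply Finset.card_le_card_of_injOn Subtype.val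
        · intro b hb
          simp only [Finset.mem_coe, mem_neighborFinset] at hb ⊢
          exact F'.adj_sub hb
        · exact fun x _ y _ hxy => Subtype.ext hxy
      calc G.maxDegree = G.degree v := hv
        _ ≤ F'.coe.degree a := h1
        _ ≤ F.degree a.1 := h2
        _ ≤ F.maxDegree := F.degree_le_maxDegree a.1
    · have : G.maxDegree = 0 := by
        simp [SimpleGraph.maxDegree, Finset.univ_eq_empty_iff.mpr (by simpa using hβ)]
      omega
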